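/- arXiv:1705.02816 — 2 statements merged into one kernel-verified Lean document; each statement's English description precedes it below -/
import Mathlib

section
/- (Dependency-testing bound, block-memoryless form) Let P be a probability measure on X × Y with marginal P_Y, and suppose codewords X_1,…,X_M are drawn i.i.d. from P_X. With a decoder that outputs the first message j whose information density i(x_j; y) = log(dP_{Y|X=x_j}/dP_Y)(y) exceeds log((M−1)/2), the average error probability is at most E[exp(−(i(X;Y) − log((M−1)/2))⁺)], where (a)⁺ = max{0, a} and (X,Y) ~ P. -/
open MeasureTheory ProbabilityTheory Finset
open scoped ENNReal

/-- The pushforward of a product of probability measures under a coordinate evaluation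
is the original measure. -/
lemma aux_pi_map_eval {𝒳 : Type*} [MeasurableSpace 𝒳] (PX : Measure 𝒳)
    [IsProbabilityMeasure PX] {M : ℕ} (j : Fin M) :
    (Measure.pi fun _ : Fin M => PX).map (fun c => c j) = PX := by
  ext s hs
  rw [Measure.map_apply (measurable_pi_apply j) hs]
  have hpre : (fun c : Fin M → 𝒳 => c j) ⁻¹' s
      = Set.pi Set.univ (Function.update (fun _ : Fin M => Set.univ) j s) := by
    ext c
    simp [Set.eval_preimage]
  rw [hpre, Measure.pi_pi]
  have hfun : (fun k : Fin M => PX (Function.update (fun _ : Fin M => Set.univ) j s k))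
      = Function.update (fun _ : Fin M => PX Set.univ) j (PX s) := by
    funext k
    by_cases hk : k = j
    · subst hk; simp
    · simp [Function.update_of_ne hk]
  rw [hfun, Finset.prod_update_of_mem (Finset.mem_univ j)]
  simp

/-- The pushforward of a product of probability measures under two distinct coordinate
evaluations is the product of the two measures. -/
lemma aux_pi_map_pair {𝒳 : Type*} [MeasurableSpace 𝒳] (PX : Measure 𝒳)
    [IsProbabilityMeasure PX] {M : ℕ} {k j : Fin M} (hkj : k ≠ j) :
    (Measure.pi fun _ : Fin M => PX).map (fun c => (c k, c j)) = PX.prod PX := by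
  refine (Measure.prod_eq fun s t hs ht => ?_).symm
  rw [Measure.map_apply ((measurable_pi_apply k).prodMk (measurable_pi_apply j)) (hs.prod ht)]
  classical
  set F : Fin M → Set 𝒳 :=
    Function.update (Function.update (fun _ : Fin M => Set.univ) k s) j t with hF
  have hpre : (fun c : Fin M → 𝒳 => (c k, c j)) ⁻¹' (s ×ˢ t) = Set.pi Set.univ F := by
    ext c
    simp only [Set.mem_preimage, Set.mem_prod, Set.mem_pi, Set.mem_univ, forall_true_left]
    constructor
    · rintro ⟨hcs, hct⟩ l
      by_cases hlj : l = j
      · subst hlj; simp [hF, Function.update_self, hct]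
      · by_cases hlk : l = k
        · subst hlk; simp [hF, Function.update_of_ne hlj, hcs]
        · simp [hF, Function.update_of_ne hlj, Function.update_of_ne hlk]
    · intro h
      refine ⟨?_, ?_⟩
      · have := h k
        simpa [hF, Function.update_of_ne hkj] using this
      · have := h j
        simpa [hF] using this
  rw [hpre, Measure.pi_pi]
  have hfun : (fun l : Fin M => PX (F l))
      = Function.update (Function.update (fun _ : Fin M => PX Set.univ) k (PX s)) j (PX t) := by
    funext l
    by_cases hlj : l = j
    · subst hlj; simp [hF]
    · by_cases hlk : l = k
      · subst hlk; simp [hF, Function.update_of_ne hlj, Function.update_of_ne hkj]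
      · simp [hF, Function.update_of_ne hlj, Function.update_of_ne hlk]
  rw [hfun, Finset.prod_update_of_mem (Finset.mem_univ j),
    Finset.prod_update_of_mem (by simp [Finset.mem_sdiff, hkj] : k ∈ Finset.univ \ {j})]
  simp [mul_comm]

/-- Dependency-testing bound, block-memoryless form. -/
theorem dependency_testing_bound
    {𝒳 𝒴 : Type*} [MeasurableSpace 𝒳] [MeasurableSpace 𝒴]
    (PX : Measure 𝒳) [IsProbabilityMeasure PX]
    (K : Kernel 𝒳 𝒴) [IsMarkovKernel K]
    (PY : Measure 𝒴) (hPY : PY = PX.bind (fun x => K x))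
    (i : 𝒳 → 𝒴 → ℝ) (him : Measurable (Function.uncurry i))
    (hdens : ∀ x, K x = PY.withDensity fun y => ENNReal.ofReal (Real.exp (i x y)))
    (M : ℕ) (hM : 2 ≤ M)
    (τ : ℝ) (hτ : τ = Real.log ((M - 1 : ℝ) / 2))
    (g : (Fin M → 𝒳) → 𝒴 → WithBot (Fin M))
    (hg : ∀ c y, g c y = (Finset.univ.filter fun j : Fin M => τ < i (c j) y).min) :
    (M : ENNReal)⁻¹ * ∑ j : Fin M,
        ∫⁻ c, (∫⁻ y, (if g c y = (j : WithBot (Fin M)) then 0 else 1) ∂(K (c j)))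
          ∂(Measure.pi fun _ : Fin M => PX) ≤
      ∫⁻ x, (∫⁻ y, ENNReal.ofReal (Real.exp (-(max 0 (i x y - τ)))) ∂(K x)) ∂PX := by
  classical
  have hPYprob : IsProbabilityMeasure PY := by
    constructor
    rw [hPY, Measure.bind_apply MeasurableSet.univ K.measurable.aemeasurable]
    simp
  set π : Measure (Fin M → 𝒳) := Measure.pi fun _ : Fin M => PX with hπ
  have hM1 : (0:ℝ) < ((M:ℝ) - 1) / 2 := by
    have : (2:ℝ) ≤ (M:ℝ) := by exact_mod_cast hM
    linarith
  have hexpτ : Real.exp τ = ((M:ℝ) - 1) / 2 := by rw [hτ, Real.exp_log hM1]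
  set E : ℝ≥0∞ := ENNReal.ofReal (((M:ℝ) - 1) / 2) with hE
  set A : 𝒳 → 𝒴 → ℝ≥0∞ := fun x y => if i x y ≤ τ then 1 else 0 with hA
  set B : 𝒳 → 𝒴 → ℝ≥0∞ := fun x y => if τ < i x y then 1 else 0 with hB
  have mA : Measurable fun p : 𝒳 × 𝒴 => A p.1 p.2 :=
    Measurable.ite (measurableSet_le him measurable_const) measurable_const measurable_const
  have mB : Measurable fun p : 𝒳 × 𝒴 => B p.1 p.2 :=
    Measurable.ite (measurableSet_lt measurable_const him) measurable_const measurable_const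
  have mAx : ∀ x, Measurable (A x) := fun x => mA.comp measurable_prodMk_left
  have mBx : ∀ x, Measurable (B x) := fun x => mB.comp measurable_prodMk_left
  set fA : 𝒳 → ℝ≥0∞ := fun x => ∫⁻ y, A x y ∂(K x) with hfA
  have mfA : Measurable fA := Measurable.lintegral_kernel_prod_right mA
  set QB : 𝒳 → ℝ≥0∞ := fun x' => ∫⁻ y, B x' y ∂PY with hQB
  have mQB : Measurable QB := Measurable.lintegral_prod_right mB
  set fB2 : 𝒳 × 𝒳 → ℝ≥0∞ := fun p => ∫⁻ y, B p.1 y ∂(K p.2) with hfB2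
  have mfB2 : Measurable fB2 := by
    have h1 : Measurable (Function.uncurry fun p : 𝒳 × 𝒳 => fun y => B p.1 y) := by
      have : (Function.uncurry fun p : 𝒳 × 𝒳 => fun y => B p.1 y)
          = (fun q : 𝒳 × 𝒴 => B q.1 q.2) ∘ (fun q : (𝒳 × 𝒳) × 𝒴 => (q.1.1, q.2)) := rfl
      rw [this]
      exact mB.comp (measurable_fst.fst.prodMk measurable_snd)
    exact Measurable.lintegral_kernel_prod_right
      (κ := K.comap Prod.snd measurable_snd) h1
  -- the main per-message bound
  have step1 : ∀ j : Fin M,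
      (∫⁻ c, (∫⁻ y, (if g c y = (j : WithBot (Fin M)) then 0 else 1) ∂(K (c j))) ∂π)
        ≤ (∫⁻ x, fA x ∂PX) + (j : ℕ) * ∫⁻ x', QB x' ∂PX := by
    intro j
    have hpt : ∀ c y, (if g c y = (j : WithBot (Fin M)) then (0:ℝ≥0∞) else 1)
        ≤ A (c j) y + ∑ k ∈ Finset.univ.filter (· < j), B (c k) y := by
      intro c y
      by_cases hgy : g c y = (j : WithBot (Fin M))
      · simp [hgy]
      · rw [if_neg hgy]
        by_cases hij : i (c j) y ≤ τ
        · calc (1:ℝ≥0∞) = A (c j) y := (if_pos hij).symm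
            _ ≤ _ := le_self_add
        · push_neg at hij
          have hjS : j ∈ Finset.univ.filter (fun k : Fin M => τ < i (c k) y) := by
            simp [hij]
          obtain ⟨b, hb⟩ := Finset.min_of_mem hjS
          have hbS := Finset.mem_of_min hb
          have hble : b ≤ j := by
            have h1 := Finset.min_le hjS
            rw [hb] at h1
            exact_mod_cast h1
          have hbj : b ≠ j := by
            rintro rfl
            exact hgy (by rw [hg]; exact hb)
          have hblt : b < j := lt_of_le_of_ne hble hbj
          have hbmem : b ∈ Finset.univ.filter (· < j) := by simp [hblt]
          have hτb : τ < i (c b) y := (Finset.mem_filter.mp hbS).2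
          have h1 : (1:ℝ≥0∞) ≤ ∑ k ∈ Finset.univ.filter (· < j), B (c k) y := by
            calc (1:ℝ≥0∞) = B (c b) y := (if_pos hτb).symm
              _ ≤ _ := Finset.single_le_sum (f := fun k => B (c k) y)
                  (fun _ _ => zero_le) hbmem
          exact le_add_left h1
    calc (∫⁻ c, (∫⁻ y, (if g c y = (j : WithBot (Fin M)) then 0 else 1) ∂(K (c j))) ∂π)
        ≤ ∫⁻ c, (fA (c j) + ∑ k ∈ Finset.univ.filter (· < j), fB2 (c k, c j)) ∂π := by
          refine lintegral_mono fun c => ?_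
          refine le_trans (lintegral_mono (hpt c)) ?_
          rw [lintegral_add_left (mAx _), lintegral_finset_sum _ (fun k _ => mBx _)]
      _ = (∫⁻ c, fA (c j) ∂π)
            + ∑ k ∈ Finset.univ.filter (· < j), ∫⁻ c, fB2 (c k, c j) ∂π := by
          rw [lintegral_add_left
              (show Measurable fun c : Fin M → 𝒳 => fA (c j) from
                mfA.comp (measurable_pi_apply j)),
            lintegral_finset_sum _ (fun k _ =>
              show Measurable fun c : Fin M → 𝒳 => fB2 (c k, c j) from
                mfB2.comp ((measurable_pi_apply k).prodMk (measurable_pi_apply j)))]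
      _ = (∫⁻ x, fA x ∂PX)
            + ∑ k ∈ Finset.univ.filter (· < j), ∫⁻ p, fB2 p ∂(PX.prod PX) := by
          congr 1
          · rw [← aux_pi_map_eval PX j, lintegral_map mfA (measurable_pi_apply j)]
          · refine Finset.sum_congr rfl fun k hk => ?_
            have hkj : k ≠ j := ne_of_lt (Finset.mem_filter.mp hk).2
            rw [← aux_pi_map_pair PX hkj,
              lintegral_map mfB2 ((measurable_pi_apply k).prodMk (measurable_pi_apply j))]
      _ = (∫⁻ x, fA x ∂PX) + (j : ℕ) * ∫⁻ x', QB x' ∂PX := by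
          congr 1
          have hprod : (∫⁻ p, fB2 p ∂(PX.prod PX)) = ∫⁻ x', QB x' ∂PX := by
            rw [MeasureTheory.lintegral_prod _ mfB2.aemeasurable]
            refine lintegral_congr fun x' => ?_
            rw [hQB, hPY]
            exact (Measure.lintegral_bind (μ := fun x => K x) K.measurable.aemeasurable (mBx x').aemeasurable).symm
          rw [Finset.sum_congr rfl (fun k _ => hprod), Finset.sum_const]
          have hcard : (Finset.univ.filter (· < j)).card = (j : ℕ) := by
            have : Finset.univ.filter (· < j) = Finset.Iio j := by
              ext k; simp
            rw [this, Fin.card_Iio]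
          rw [hcard, nsmul_eq_mul]
  -- the per-x density identity
  have hxid : ∀ x, fA x + E * QB x
      = ∫⁻ y, ENNReal.ofReal (Real.exp (-(max 0 (i x y - τ)))) ∂(K x) := by
    intro x
    have hsecond : E * QB x = ∫⁻ y, ENNReal.ofReal (Real.exp (τ - i x y)) * B x y ∂(K x) := by
      have hmg : Measurable fun y => ENNReal.ofReal (Real.exp (τ - i x y)) * B x y := by
        refine Measurable.mul ?_ (mBx x)
        refine ENNReal.measurable_ofReal.comp (Real.measurable_exp.comp ?_)
        exact measurable_const.sub (him.comp measurable_prodMk_left)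
      have hmf : Measurable fun y => ENNReal.ofReal (Real.exp (i x y)) :=
        ENNReal.measurable_ofReal.comp (Real.measurable_exp.comp
          (him.comp measurable_prodMk_left))
      rw [hdens x, lintegral_withDensity_eq_lintegral_mul _ hmf hmg]
      have hpt : ((fun y => ENNReal.ofReal (Real.exp (i x y)))
          * fun y => ENNReal.ofReal (Real.exp (τ - i x y)) * B x y)
          = fun y => ENNReal.ofReal (Real.exp τ) * B x y := by
        funext y
        simp only [Pi.mul_apply]
        rw [← mul_assoc, ← ENNReal.ofReal_mul (Real.exp_nonneg _), ← Real.exp_add]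
        ring_nf
      rw [hpt, lintegral_const_mul _ (mBx x), hexpτ, ← hE, hQB]
      -- goal now: E * ∫⁻ y, B x y ∂PY = E * ∫⁻ y, B x y ∂(PY.withDensity ...)? no
    have hrhs : ∀ y, ENNReal.ofReal (Real.exp (-(max 0 (i x y - τ))))
        = A x y + ENNReal.ofReal (Real.exp (τ - i x y)) * B x y := by
      intro y
      by_cases h : i x y ≤ τ
      · have h1 : max 0 (i x y - τ) = 0 := max_eq_left (by linarith)
        have h2 : ¬ τ < i x y := not_lt.mpr h
        simp [hA, hB, h, h2, h1]
      · push_neg at h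
        have h1 : max 0 (i x y - τ) = i x y - τ := max_eq_right (by linarith)
        have h2 : ¬ i x y ≤ τ := not_le.mpr h
        simp only [hA, hB, if_neg h2, if_pos h, mul_one, zero_add, h1]
        ring_nf
    rw [lintegral_congr hrhs]
    have hmg : Measurable fun y => ENNReal.ofReal (Real.exp (τ - i x y)) * B x y := by
      refine Measurable.mul ?_ (mBx x)
      refine ENNReal.measurable_ofReal.comp (Real.measurable_exp.comp ?_)
      exact measurable_const.sub (him.comp measurable_prodMk_left)
    rw [lintegral_add_left (mAx x) _, hsecond]
  -- counting constant
  have hMne : (M : ℝ≥0∞) ≠ 0 := by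
    simp only [ne_eq, Nat.cast_eq_zero]
    omega
  have hMnetop : (M : ℝ≥0∞) ≠ ⊤ := ENNReal.natCast_ne_top M
  have hcount : (M : ℝ≥0∞)⁻¹ * ((∑ j : Fin M, (j : ℕ) : ℕ) : ℝ≥0∞) = E := by
    set N : ℕ := ∑ j : Fin M, (j : ℕ) with hN
    have hN2 : N * 2 = M * (M - 1) := by
      have hNr : N = ∑ k ∈ Finset.range M, k := Fin.sum_univ_eq_sum_range (fun x => x) M
      rw [hNr]
      exact Finset.sum_range_id_mul_two M
    have hNr : (N : ℝ) = (M : ℝ) * (((M:ℝ) - 1) / 2) := by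
      have h2 : ((N : ℝ)) * 2 = (M:ℝ) * ((M:ℝ) - 1) := by
        have := congrArg (fun n : ℕ => (n : ℝ)) hN2
        push_cast at this
        rw [this]
        have hM1' : (1:ℝ) ≤ (M:ℝ) := by
          have : (2:ℝ) ≤ (M:ℝ) := by exact_mod_cast hM
          linarith
        rw [Nat.cast_sub (by omega)]
        push_cast
        ring
      linarith
    have : (N : ℝ≥0∞) = (M : ℝ≥0∞) * E := by
      rw [hE, ← ENNReal.ofReal_natCast N, ← ENNReal.ofReal_natCast M,
        ← ENNReal.ofReal_mul (by positivity), hNr]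
    rw [this, ← mul_assoc, ENNReal.inv_mul_cancel hMne hMnetop, one_mul]
  -- put everything together
  calc (M : ENNReal)⁻¹ * ∑ j : Fin M,
        ∫⁻ c, (∫⁻ y, (if g c y = (j : WithBot (Fin M)) then 0 else 1) ∂(K (c j))) ∂π
      ≤ (M : ENNReal)⁻¹ * ∑ j : Fin M,
          ((∫⁻ x, fA x ∂PX) + (j : ℕ) * ∫⁻ x', QB x' ∂PX) := by
        exact mul_le_mul_right (Finset.sum_le_sum fun j _ => step1 j) _
    _ = (∫⁻ x, fA x ∂PX) + E * ∫⁻ x', QB x' ∂PX := by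
        rw [Finset.sum_add_distrib, Finset.sum_const, Finset.card_univ, Fintype.card_fin,
          ← Finset.sum_mul, mul_add, nsmul_eq_mul, ← mul_assoc,
          ENNReal.inv_mul_cancel hMne hMnetop, one_mul]
        congr 1
        rw [← mul_assoc]
        congr 1
        rw [← hcount]
        congr 1
        exact (Nat.cast_sum Finset.univ (fun j : Fin M => (j : ℕ))).symm
    _ = ∫⁻ x, (fA x + E * QB x) ∂PX := by
        rw [lintegral_add_left mfA, lintegral_const_mul _ mQB]
    _ = ∫⁻ x, (∫⁻ y, ENNReal.ofReal (Real.exp (-(max 0 (i x y - τ)))) ∂(K x)) ∂PX :=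
        lintegral_congr hxid
end

section
/- (Verdú–Han-type converse from the min-max converse) For any random variable S (the information density under the channel law) and any ε ∈ (0,1), any (M, ε)-code satisfies, for every λ ≥ 0: log M ≤ λ − log( (P[S ≤ λ] − ε)⁺ ), where the right-hand side is interpreted as +∞ if P[S ≤ λ] ≤ ε. Formally: if β_{1−ε} denotes the Neyman–Pearson function between the channel law and an auxiliary law under which the LLR equals S, then β_{1−ε} ≥ e^{−λ}(P[S ≤ λ] − ε) for all λ ≥ 0. -/
open MeasureTheory Set

/-- Neyman–Pearson beta function: `β_α(P,Q)` is the infimum of `Q(E)` over measurable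
events `E` with `P(E) ≥ α`. -/
noncomputable def npBeta {Ω : Type*} [MeasurableSpace Ω] (P Q : Measure Ω) (α : ℝ) : ENNReal :=
  ⨅ (E : Set Ω) (_ : MeasurableSet E) (_ : ENNReal.ofReal α ≤ P E), Q E

/-- Verdú–Han-type converse from the min-max converse: if `S = log (dP/dQ)`
is the log-likelihood ratio between the channel law `P` and the auxiliary law `Q`, then for
every `λ ≥ 0`, `β_{1-ε}(P,Q) ≥ e^{-λ} (P[S ≤ λ] - ε)`. -/
theorem verdu_han_converse {Ω : Type*} [MeasurableSpace Ω]
    (P Q : Measure Ω) [IsProbabilityMeasure P] [IsProbabilityMeasure Q]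
    (hPQ : P ≪ Q) (hQP : Q ≪ P)
    (S : Ω → ℝ) (hS : S = fun ω => Real.log (P.rnDeriv Q ω).toReal)
    (ε : ℝ) (hε : ε ∈ Ioo (0 : ℝ) 1) :
    ∀ lam : ℝ, 0 ≤ lam →
      ENNReal.ofReal (Real.exp (-lam) * ((P {ω | S ω ≤ lam}).toReal - ε)) ≤
        npBeta P Q (1 - ε) := by
  intro lam hlam
  refine le_iInf fun E => le_iInf fun hE => le_iInf fun hPE => ?_
  set r := P.rnDeriv Q with hr
  have hrm : Measurable r := Measure.measurable_rnDeriv P Q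
  have hAeq : {ω | S ω ≤ lam} = {ω | Real.log (r ω).toReal ≤ lam} := by
    rw [hS]
  set A : Set Ω := {ω | Real.log (r ω).toReal ≤ lam} with hA
  rw [hAeq]
  have hAm : MeasurableSet A :=
    measurableSet_le (hrm.ennreal_toReal.log) measurable_const
  -- a.e. bound on E ∩ A
  have hbound : ∀ᵐ ω ∂Q, ω ∈ E ∩ A → r ω ≤ ENNReal.ofReal (Real.exp lam) := by
    filter_upwards [Measure.rnDeriv_lt_top P Q] with ω hlt hω
    rcases eq_or_lt_of_le (zero_le : 0 ≤ r ω) with h0 | h0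
    · simp [← h0]
    · have hto : 0 < (r ω).toReal := ENNReal.toReal_pos h0.ne' hlt.ne
      have hle : (r ω).toReal ≤ Real.exp lam := (Real.log_le_iff_le_exp hto).mp hω.2
      calc r ω = ENNReal.ofReal (r ω).toReal := (ENNReal.ofReal_toReal hlt.ne).symm
        _ ≤ _ := ENNReal.ofReal_le_ofReal hle
  have h1 : P (E ∩ A) ≤ ENNReal.ofReal (Real.exp lam) * Q (E ∩ A) := by
    rw [← Measure.setLIntegral_rnDeriv hPQ]
    calc ∫⁻ ω in E ∩ A, r ω ∂Q
        ≤ ∫⁻ _ in E ∩ A, ENNReal.ofReal (Real.exp lam) ∂Q :=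
          lintegral_mono_ae ((ae_restrict_iff' (hE.inter hAm)).2 hbound)
      _ = ENNReal.ofReal (Real.exp lam) * Q (E ∩ A) := setLIntegral_const _ _
  have hEc : P Eᶜ ≤ ENNReal.ofReal ε := by
    rw [measure_compl hE (measure_ne_top P E), measure_univ]
    have heq : ENNReal.ofReal ε = 1 - ENNReal.ofReal (1 - ε) := by
      rw [← ENNReal.ofReal_one, ← ENNReal.ofReal_sub _ (by linarith [hε.2])]
      norm_num
    rw [heq]
    exact tsub_le_tsub_left hPE _
  have h2 : P A - ENNReal.ofReal ε ≤ P (E ∩ A) := by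
    rw [tsub_le_iff_right]
    have hsub : A ⊆ (E ∩ A) ∪ Eᶜ := fun ω hω => by
      by_cases h : ω ∈ E
      · exact Or.inl ⟨h, hω⟩
      · exact Or.inr h
    calc P A ≤ P ((E ∩ A) ∪ Eᶜ) := measure_mono hsub
      _ ≤ P (E ∩ A) + P Eᶜ := measure_union_le _ _
      _ ≤ P (E ∩ A) + ENNReal.ofReal ε := add_le_add_right hEc _
  have key : P A - ENNReal.ofReal ε ≤ ENNReal.ofReal (Real.exp lam) * Q E :=
    h2.trans (h1.trans (mul_le_mul_right (measure_mono inter_subset_left) _))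
  calc ENNReal.ofReal (Real.exp (-lam) * ((P A).toReal - ε))
      = ENNReal.ofReal (Real.exp (-lam)) * ENNReal.ofReal ((P A).toReal - ε) :=
        ENNReal.ofReal_mul (Real.exp_pos _).le
    _ = ENNReal.ofReal (Real.exp (-lam)) * (P A - ENNReal.ofReal ε) := by
        rw [ENNReal.ofReal_sub _ hε.1.le, ENNReal.ofReal_toReal (measure_ne_top P A)]
    _ ≤ ENNReal.ofReal (Real.exp (-lam)) * (ENNReal.ofReal (Real.exp lam) * Q E) :=
        mul_le_mul_right key _
    _ = (ENNReal.ofReal (Real.exp (-lam)) * ENNReal.ofReal (Real.exp lam)) * Q E :=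
        (mul_assoc _ _ _).symm
    _ = Q E := by
        rw [← ENNReal.ofReal_mul (Real.exp_pos _).le, ← Real.exp_add]
        simp
end
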